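/- In the flat case f(ρ)=ρ, an equilibrium solution φ satisfies the conservation law d/dρ { ρⁿ [Φ(φ',τ,…,τ) − (φ' − τ) Φ₁] } = n ρ^{n-1} Φ(φ',τ,…,τ), where τ = φ/ρ. -/

import Mathlib

set_option synthInstance.maxHeartbeats 1000000 in
set_option maxHeartbeats 1000000 in
/-- Auxiliary lemma: the conservation law with clean binders. -/
theorem aux13 (n : ℕ) (hn : 2 ≤ n)
    (Φ : (Fin n → ℝ) → ℝ) (hΦ : ContDiff ℝ 2 Φ)
    (hsym : ∀ (π : Equiv.Perm (Fin n)) (v : Fin n → ℝ), Φ (v ∘ π) = Φ v)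
    (i0 i1 : Fin n) (hne : i0 ≠ i1)
    (φ φ' φ'' τ Φ₁ Φ₂ : ℝ → ℝ) (ρ : ℝ) (hρ0 : 0 < ρ)
    (hφd : HasDerivAt φ (φ' ρ) ρ)
    (hφd' : HasDerivAt φ' (φ'' ρ) ρ)
    (hτ : ∀ s, τ s = φ s / s)
    (hΦ₁ : Φ₁ ρ = fderiv ℝ Φ (fun j => if j = i0 then φ' ρ else τ ρ) (Pi.single i0 1))
    (hΦ₂ : Φ₂ ρ = fderiv ℝ Φ (fun j => if j = i0 then φ' ρ else τ ρ) (Pi.single i1 1))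
    (heq : HasDerivAt (fun s => s ^ (n - 1) * Φ₁ s)
      ((n - 1 : ℝ) * ρ ^ (n - 2) * Φ₂ ρ) ρ) :
    HasDerivAt
      (fun s => s ^ n *
        (Φ (fun j => if j = i0 then φ' s else τ s) - (φ' s - τ s) * Φ₁ s))
      ((n : ℝ) * ρ ^ (n - 1) *
        Φ (fun j => if j = i0 then φ' ρ else τ ρ)) ρ := by
  obtain ⟨m, rfl⟩ : ∃ m, n = m + 2 := ⟨n - 2, by omega⟩
  have hρne : ρ ≠ 0 := ne_of_gt hρ0
  set v : Fin (m+2) → ℝ := fun j => if j = i0 then φ' ρ else τ ρ with hv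
  set D := fderiv ℝ Φ v with hD
  have hΦdiff : Differentiable ℝ Φ := hΦ.differentiable (by norm_num)
  have hDv : HasFDerivAt Φ D v := (hΦdiff v).hasFDerivAt
  -- directional derivatives
  have hdir : ∀ w : Fin (m+2) → ℝ,
      HasDerivAt (fun t : ℝ => Φ (v + t • w)) (D w) 0 := by
    intro w
    have hline : HasDerivAt (fun t : ℝ => v + t • w) w 0 := by
      simpa using ((hasDerivAt_id (0:ℝ)).smul_const w).const_add v
    have h0 : v + (0:ℝ) • w = v := by simp
    have hDv' : HasFDerivAt Φ D (v + (0:ℝ) • w) := by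
      rw [h0]
      exact hDv
    exact hDv'.comp_hasDerivAt 0 hline
  -- symmetry: all off-radial directional derivatives agree
  have hswap : ∀ j : Fin (m+2), j ≠ i0 → D (Pi.single j 1) = D (Pi.single i1 1) := by
    intro j hj
    rcases eq_or_ne j i1 with rfl | hj1
    · rfl
    · have key : ∀ t : ℝ, Φ (v + t • (Pi.single j 1 : Fin (m+2) → ℝ)) = Φ (v + t • (Pi.single i1 1 : Fin (m+2) → ℝ)) := by
        intro t
        have hs := hsym (Equiv.swap i1 j) (v + t • (Pi.single i1 1 : Fin (m+2) → ℝ))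
        rw [← hs]
        congr 1
        funext i
        have hfix : Equiv.swap i1 j i0 = i0 :=
          Equiv.swap_apply_of_ne_of_ne hne (Ne.symm hj)
        have hs0 : Equiv.swap i1 j i = i0 ↔ i = i0 := by
          constructor
          · intro h
            exact (Equiv.swap i1 j).injective (h.trans hfix.symm)
          · intro h; rw [h]; exact hfix
        have hs1 : Equiv.swap i1 j i = i1 ↔ i = j := by
          constructor
          · intro h
            exact (Equiv.swap i1 j).injective (h.trans (Equiv.swap_apply_right i1 j).symm)
          · intro h; rw [h]; exact Equiv.swap_apply_right i1 j
        simp only [Function.comp_apply, Pi.add_apply, Pi.smul_apply, Pi.single_apply,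
          smul_eq_mul, hv]
        rw [if_congr hs0 rfl rfl, if_congr hs1 rfl rfl]
      have h1 := hdir (Pi.single j 1 : Fin (m+2) → ℝ)
      have h2 := hdir (Pi.single i1 1 : Fin (m+2) → ℝ)
      have hfe : (fun t : ℝ => Φ (v + t • (Pi.single j 1 : Fin (m+2) → ℝ)))
          = (fun t : ℝ => Φ (v + t • (Pi.single i1 1 : Fin (m+2) → ℝ))) := funext key
      rw [hfe] at h1
      exact h1.unique h2
  -- derivative of τ
  set t' : ℝ := (φ' ρ - τ ρ) / ρ with ht'
  have hτd : HasDerivAt τ t' ρ := by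
    have h : HasDerivAt (fun y => φ y / y) ((φ' ρ * ρ - φ ρ * 1) / ρ ^ 2) ρ := by
      exact hφd.div (hasDerivAt_id' ρ) hρne
    have hval : (φ' ρ * ρ - φ ρ * 1) / ρ ^ 2 = t' := by
      rw [ht', hτ ρ]
      field_simp
    rw [funext hτ]
    exact hval ▸ h
  -- derivative of the inner vector
  set W : Fin (m+2) → ℝ := fun j => if j = i0 then φ'' ρ else t' with hW
  have hVd : HasDerivAt (fun s => (fun j : Fin (m+2) => if j = i0 then φ' s else τ s)) W ρ := by
    rw [hasDerivAt_pi]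
    intro j
    rcases eq_or_ne j i0 with rfl | hj
    · simpa [hW] using hφd'
    · simpa [hW, hj] using hτd
  -- derivative of the composite Φ ∘ V
  have hF : HasDerivAt (fun s => Φ (fun j : Fin (m+2) => if j = i0 then φ' s else τ s)) (D W) ρ :=
    hDv.comp_hasDerivAt ρ hVd
  -- compute D W
  have hDW : D W = φ'' ρ * Φ₁ ρ + ((m:ℝ)+1) * t' * Φ₂ ρ := by
    have hWsum : W = ∑ j : Fin (m+2), W j • (Pi.single j 1 : Fin (m+2) → ℝ) := by
      funext i
      simp [Finset.sum_apply, Pi.single_apply]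
    have step1 : D W = ∑ j : Fin (m+2), W j * D (Pi.single j 1) := by
      conv_lhs => rw [hWsum]
      rw [map_sum]
      simp only [map_smul, smul_eq_mul]
    rw [step1, ← Finset.add_sum_erase _ _ (Finset.mem_univ i0)]
    have hconst : ∀ j ∈ Finset.univ.erase i0, W j * D (Pi.single j 1) = t' * Φ₂ ρ := by
      intro j hj
      have hj0 : j ≠ i0 := Finset.ne_of_mem_erase hj
      rw [hswap j hj0, ← hΦ₂]
      simp [hW, hj0]
    rw [Finset.sum_congr rfl hconst, Finset.sum_const,
      Finset.card_erase_of_mem (Finset.mem_univ _), Finset.card_univ, Fintype.card_fin]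
    simp only [hW, if_pos rfl, ← hΦ₁, nsmul_eq_mul]
    push_cast
    ring
  -- normalize the equilibrium equation
  have heq' : HasDerivAt (fun s => s ^ (m+1) * Φ₁ s) (((m:ℝ)+1) * ρ ^ m * Φ₂ ρ) ρ := by
    have h2 : ((m+2 : ℕ) : ℝ) - 1 = (m:ℝ)+1 := by push_cast; ring
    exact h2 ▸ heq
  -- assemble via product rule
  have hG := ((hasDerivAt_pow (m+2) ρ).mul hF).sub
    (((hφd'.sub hτd).mul (hasDerivAt_id ρ)).mul heq')
  have hfe : (fun s => s ^ (m+2) *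
        (Φ (fun j : Fin (m+2) => if j = i0 then φ' s else τ s) - (φ' s - τ s) * Φ₁ s))
      = (fun s => s ^ (m+2) * Φ (fun j : Fin (m+2) => if j = i0 then φ' s else τ s)
          - ((φ' s - τ s) * s) * (s ^ (m+1) * Φ₁ s)) := by
    funext s
    ring
  rw [hfe]
  refine HasDerivAt.congr_deriv hG ?_
  have hmul : t' * ρ = φ' ρ - τ ρ := by
    rw [ht']; field_simp
  rw [hDW]
  simp only [Pi.mul_apply, Pi.sub_apply, hv]
  rw [← hmul]
  simp only [id_eq, mul_one]
  push_cast
  ring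

/-- in the flat case `f(ρ) = ρ`, an equilibrium solution `φ` satisfies the
conservation law `d/dρ { ρⁿ [Φ(φ',τ,…,τ) - (φ' - τ) Φ₁] } = n ρ^{n-1} Φ(φ',τ,…,τ)`,
where `τ = φ/ρ`. -/
theorem stmt_13 (n : ℕ) (hn : 2 ≤ n)
    (Φ : (Fin n → ℝ) → ℝ) (hΦ : ContDiff ℝ 2 Φ)
    (hsym : ∀ (π : Equiv.Perm (Fin n)) (v : Fin n → ℝ), Φ (v ∘ π) = Φ v)
    (φ φ' φ'' : ℝ → ℝ)
    (hφd : ∀ ρ ∈ Set.Ioc (0:ℝ) 1, HasDerivAt φ (φ' ρ) ρ)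
    (hφd' : ∀ ρ ∈ Set.Ioc (0:ℝ) 1, HasDerivAt φ' (φ'' ρ) ρ)
    (hφpos : ∀ ρ ∈ Set.Ioc (0:ℝ) 1, 0 < φ ρ)
    (hφ'pos : ∀ ρ ∈ Set.Ioc (0:ℝ) 1, 0 < φ' ρ)
    (τ : ℝ → ℝ) (hτ : ∀ ρ, τ ρ = φ ρ / ρ)
    (Φ₁ Φ₂ : ℝ → ℝ)
    (hΦ₁ : ∀ ρ, Φ₁ ρ = fderiv ℝ Φ
      (fun j => if j = (⟨0, by omega⟩ : Fin n) then φ' ρ else τ ρ)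
      (Pi.single (⟨0, by omega⟩ : Fin n) 1))
    (hΦ₂ : ∀ ρ, Φ₂ ρ = fderiv ℝ Φ
      (fun j => if j = (⟨0, by omega⟩ : Fin n) then φ' ρ else τ ρ)
      (Pi.single (⟨1, by omega⟩ : Fin n) 1))
    (heq : ∀ ρ ∈ Set.Ioc (0:ℝ) 1, HasDerivAt (fun s => s ^ (n - 1) * Φ₁ s)
      ((n - 1 : ℝ) * ρ ^ (n - 2) * Φ₂ ρ) ρ) :
    ∀ ρ ∈ Set.Ioc (0:ℝ) 1,
      HasDerivAt
        (fun s => s ^ n *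
          (Φ (fun j => if j = (⟨0, by omega⟩ : Fin n) then φ' s else τ s) -
            (φ' s - τ s) * Φ₁ s))
        ((n : ℝ) * ρ ^ (n - 1) *
          Φ (fun j => if j = (⟨0, by omega⟩ : Fin n) then φ' ρ else τ ρ)) ρ := by
  intro ρ hρ
  have h01 : (⟨0, by omega⟩ : Fin n) ≠ (⟨1, by omega⟩ : Fin n) := by
    simp [Fin.ext_iff]
  exact aux13 n hn Φ hΦ hsym ⟨0, by omega⟩ ⟨1, by omega⟩ h01 φ φ' φ'' τ Φ₁ Φ₂ ρ hρ.1
    (hφd ρ hρ) (hφd' ρ hρ) hτ (hΦ₁ ρ) (hΦ₂ ρ) (heq ρ hρ)
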